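/- Let ν be a partition with conjugate νᵀ, let k ≥ 1 be an integer, and for complex w with w^{2k} ≠ 1 define the rational expression F(w) = Σ_{i=1}^{ℓ(ν)} (w^{k(2ν_i − 2i + 1)} − w^{k(1 − 2i)}) + 1/(w^k − w^{−k}). Then: (a) for every complex w with |w| > 1, the series Σ_{i=1}^∞ w^{k(2ν_i − 2i + 1)} converges and its sum equals F(w); (b) for every complex w with 0 < |w| < 1, the series Σ_{j=1}^∞ w^{−k(2νᵀ_j − 2j + 1)} converges and its sum equals −F(w). -/

import Mathlib

/-- A partition: a non-increasing sequence of non-negative integers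
with only finitely many nonzero terms.  `part i` is the part `ν_{i+1}`
(0-based indexing). -/
structure NPartition where
  part : ℕ → ℕ
  antitone : ∀ ⦃i j : ℕ⦄, i ≤ j → part j ≤ part i
  eventually_zero : ∃ N : ℕ, ∀ i : ℕ, N ≤ i → part i = 0

/-- The conjugate partition: `conj f j = #{i ≥ 1 : f_i ≥ j+1}`
(0-based: this is `(fᵀ)_{j+1}`). -/
noncomputable def conj (f : ℕ → ℕ) (j : ℕ) : ℕ :=
  Nat.card {i : ℕ // j + 1 ≤ f i}

/-- The number of nonzero parts `ℓ(ν)`. -/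
noncomputable def plen (f : ℕ → ℕ) : ℕ :=
  Nat.card {i : ℕ // f i ≠ 0}

/-- The rational expression
`F(w) = Σ_{i=1}^{ℓ(ν)} (w^{k(2ν_i − 2i + 1)} − w^{k(1 − 2i)}) + 1/(w^k − w^{−k})`
(0-based indexing). -/
noncomputable def Fexpr (ν : NPartition) (k : ℕ) (w : ℂ) : ℂ :=
  (∑ i ∈ Finset.range (plen ν.part),
      (w ^ ((k : ℤ) * (2 * (ν.part i : ℤ) - 2 * (i : ℤ) - 1))
        - w ^ ((k : ℤ) * (-2 * (i : ℤ) - 1)))) +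
  1 / (w ^ (k : ℤ) - w ^ (-(k : ℤ)))

namespace PSRCaux

lemma nat_le_of_lt_imp {a b : ℕ} (h : ∀ i, i < a → i < b) : a ≤ b := by
  by_contra h'
  push_neg at h'
  exact absurd (h b h') (lt_irrefl b)

variable {f : ℕ → ℕ}

lemma conj_lt_iff (hf : ∀ ⦃i j : ℕ⦄, i ≤ j → f j ≤ f i)
    (hev : ∃ N : ℕ, ∀ i : ℕ, N ≤ i → f i = 0) (m i : ℕ) :
    i < conj f m ↔ m < f i := by
  obtain ⟨N, hN⟩ := hev
  have hex : ∃ n, f n ≤ m := ⟨N, by rw [hN N le_rfl]; exact Nat.zero_le m⟩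
  have hiff : ∀ i, m + 1 ≤ f i ↔ i < Nat.find hex := by
    intro i
    constructor
    · intro h
      by_contra h'
      push_neg at h'
      have h1 : f i ≤ f (Nat.find hex) := by
        rcases eq_or_lt_of_le h' with h'' | h''
        · rw [h'']
        · exact hf (le_of_lt h'')
      have h2 := Nat.find_spec hex
      omega
    · intro h
      by_contra h'
      push_neg at h'
      have := Nat.find_min' hex (Nat.lt_succ_iff.mp h')
      omega
  have hc : conj f m = Nat.find hex := by
    unfold conj
    rw [Nat.card_congr ((Equiv.subtypeEquivRight hiff).trans Fin.equivSubtype.symm),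
      Nat.card_eq_fintype_card, Fintype.card_fin]
  rw [hc]
  exact (hiff i).symm

lemma conj_antitone (hf : ∀ ⦃i j : ℕ⦄, i ≤ j → f j ≤ f i)
    (hev : ∃ N : ℕ, ∀ i : ℕ, N ≤ i → f i = 0) :
    ∀ ⦃m m' : ℕ⦄, m ≤ m' → conj f m' ≤ conj f m := by
  intro m m' hmm'
  apply nat_le_of_lt_imp
  intro i hi
  rw [conj_lt_iff hf hev] at hi ⊢
  omega

lemma conj_ev (hf : ∀ ⦃i j : ℕ⦄, i ≤ j → f j ≤ f i)
    (hev : ∃ N : ℕ, ∀ i : ℕ, N ≤ i → f i = 0) :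
    ∀ m, f 0 ≤ m → conj f m = 0 := by
  intro m hm
  by_contra h
  have h0 : 0 < conj f m := Nat.pos_of_ne_zero h
  have h1 := (conj_lt_iff hf hev m 0).mp h0
  have h2 : f 0 ≤ f 0 := le_rfl
  omega

lemma plen_lt_iff (hf : ∀ ⦃i j : ℕ⦄, i ≤ j → f j ≤ f i)
    (hev : ∃ N : ℕ, ∀ i : ℕ, N ≤ i → f i = 0) (i : ℕ) :
    i < plen f ↔ f i ≠ 0 := by
  have h : plen f = conj f 0 := by
    unfold plen conj
    exact Nat.card_congr (Equiv.subtypeEquivRight (fun i => by omega))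
  rw [h, conj_lt_iff hf hev]
  omega

lemma plen_conj (hf : ∀ ⦃i j : ℕ⦄, i ≤ j → f j ≤ f i)
    (hev : ∃ N : ℕ, ∀ i : ℕ, N ≤ i → f i = 0) :
    plen (conj f) = f 0 := by
  have h1 := conj_lt_iff hf hev
  have hf' := conj_antitone hf hev
  have hev' : ∃ N : ℕ, ∀ m : ℕ, N ≤ m → conj f m = 0 := ⟨f 0, conj_ev hf hev⟩
  have h2 := plen_lt_iff hf' hev'
  apply Nat.le_antisymm
  · apply nat_le_of_lt_imp
    intro i hi
    have h3 := (h2 i).mp hi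
    have h4 : 0 < conj f i := Nat.pos_of_ne_zero h3
    exact (h1 i 0).mp h4
  · apply nat_le_of_lt_imp
    intro i hi
    rw [h2 i]
    have h4 : 0 < conj f i := (h1 i 0).mpr hi
    omega

lemma comb_identity (hf : ∀ ⦃i j : ℕ⦄, i ≤ j → f j ≤ f i)
    (hev : ∃ N : ℕ, ∀ i : ℕ, N ≤ i → f i = 0) (x : ℂ) :
    ∑ i ∈ Finset.range (plen f), x ^ ((f i : ℤ) - (i : ℤ))
      + ∑ j ∈ Finset.range (f 0), x ^ ((j : ℤ) + 1 - (conj f j : ℤ))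
    = ∑ i ∈ Finset.range (plen f), x ^ (-(i : ℤ))
      + ∑ j ∈ Finset.range (f 0), x ^ ((j : ℤ) + 1) := by
  classical
  set L := plen f with hLdef
  set M := f 0 with hMdef
  have hdual : ∀ i j : ℕ, i < conj f j ↔ j < f i := fun i j => conj_lt_iff hf hev j i
  have hL : ∀ i, i < L ↔ f i ≠ 0 := plen_lt_iff hf hev
  have hconjL : ∀ j, conj f j ≤ L := by
    intro j
    have h0 : conj f j ≤ conj f 0 := conj_antitone hf hev (Nat.zero_le j)
    have hL0 : conj f 0 ≤ L := by
      apply nat_le_of_lt_imp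
      intro i hi
      rw [hL]
      have := (hdual i 0).mp hi
      omega
    omega
  have hainj : ∀ i i' : ℕ, (f i : ℤ) - (i : ℤ) = (f i' : ℤ) - (i' : ℤ) → i = i' := by
    intro i i' h
    rcases lt_trichotomy i i' with h' | h' | h'
    · have := hf (le_of_lt h'); omega
    · exact h'
    · have := hf (le_of_lt h'); omega
  have hbinj : ∀ j j' : ℕ,
      (j : ℤ) + 1 - (conj f j : ℤ) = (j' : ℤ) + 1 - (conj f j' : ℤ) → j = j' := by
    intro j j' h
    rcases lt_trichotomy j j' with h' | h' | h'
    · have := conj_antitone hf hev (le_of_lt h'); omega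
    · exact h'
    · have := conj_antitone hf hev (le_of_lt h'); omega
  set A := (Finset.range L).image (fun i : ℕ => (f i : ℤ) - (i : ℤ)) with hA
  set B := (Finset.range M).image (fun j : ℕ => (j : ℤ) + 1 - (conj f j : ℤ)) with hB
  set C := (Finset.range L).image (fun i : ℕ => -(i : ℤ)) with hC
  set D := (Finset.range M).image (fun j : ℕ => (j : ℤ) + 1) with hD
  set I := Finset.Icc (1 - (L : ℤ)) (M : ℤ) with hI
  have hIcard : I.card = L + M := by
    rw [hI, Int.card_Icc]
    omega
  have hAcard : A.card = L := by
    rw [hA, Finset.card_image_of_injOn (fun i _ j _ h => hainj i j h), Finset.card_range]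
  have hBcard : B.card = M := by
    rw [hB, Finset.card_image_of_injOn (fun i _ j _ h => hbinj i j h), Finset.card_range]
  have hCcard : C.card = L := by
    rw [hC, Finset.card_image_of_injOn (fun i _ j _ h => by omega), Finset.card_range]
  have hDcard : D.card = M := by
    rw [hD, Finset.card_image_of_injOn (fun i _ j _ h => by omega), Finset.card_range]
  have hAB : Disjoint A B := by
    rw [Finset.disjoint_left]
    rintro e heA heB
    rw [hA, Finset.mem_image] at heA
    rw [hB, Finset.mem_image] at heB
    obtain ⟨i, hiL, rfl⟩ := heA
    obtain ⟨j, hjM, hij⟩ := heB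
    rw [Finset.mem_range] at hiL hjM
    by_cases hcase : j < f i
    · have h1 : i < conj f j := (hdual i j).mpr hcase
      omega
    · push_neg at hcase
      have h1 : conj f j ≤ i := by
        by_contra h
        push_neg at h
        have := (hdual i j).mp h
        omega
      omega
  have hCD : Disjoint C D := by
    rw [Finset.disjoint_left]
    rintro e heC heD
    rw [hC, Finset.mem_image] at heC
    rw [hD, Finset.mem_image] at heD
    obtain ⟨i, hiL, rfl⟩ := heC
    obtain ⟨j, hjM, hij⟩ := heD
    omega
  have hABsub : A ∪ B ⊆ I := by
    intro e he
    rw [Finset.mem_union] at he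
    rw [hI, Finset.mem_Icc]
    rcases he with he | he
    · rw [hA, Finset.mem_image] at he
      obtain ⟨i, hiL, rfl⟩ := he
      rw [Finset.mem_range] at hiL
      have h1 : f i ≠ 0 := (hL i).mp hiL
      have h2 : f i ≤ M := by rw [hMdef]; exact hf (Nat.zero_le i)
      omega
    · rw [hB, Finset.mem_image] at he
      obtain ⟨j, hjM, rfl⟩ := he
      rw [Finset.mem_range] at hjM
      have h1 : 0 < conj f j := (hdual 0 j).mpr hjM
      have h2 : conj f j ≤ L := hconjL j
      omega
  have hCDsub : C ∪ D ⊆ I := by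
    intro e he
    rw [Finset.mem_union] at he
    rw [hI, Finset.mem_Icc]
    rcases he with he | he
    · rw [hC, Finset.mem_image] at he
      obtain ⟨i, hiL, rfl⟩ := he
      rw [Finset.mem_range] at hiL
      omega
    · rw [hD, Finset.mem_image] at he
      obtain ⟨j, hjM, rfl⟩ := he
      rw [Finset.mem_range] at hjM
      omega
  have hABI : A ∪ B = I := by
    apply Finset.eq_of_subset_of_card_le hABsub
    rw [hIcard, Finset.card_union_of_disjoint hAB, hAcard, hBcard]
  have hCDI : C ∪ D = I := by
    apply Finset.eq_of_subset_of_card_le hCDsub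
    rw [hIcard, Finset.card_union_of_disjoint hCD, hCcard, hDcard]
  have key : ∑ e ∈ A, x ^ e + ∑ e ∈ B, x ^ e = ∑ e ∈ C, x ^ e + ∑ e ∈ D, x ^ e := by
    rw [← Finset.sum_union hAB, ← Finset.sum_union hCD, hABI, hCDI]
  have e1 : ∑ e ∈ A, x ^ e = ∑ i ∈ Finset.range L, x ^ ((f i : ℤ) - (i : ℤ)) := by
    rw [hA]; exact Finset.sum_image (fun i _ j _ h => hainj i j h)
  have e2 : ∑ e ∈ B, x ^ e
      = ∑ j ∈ Finset.range M, x ^ ((j : ℤ) + 1 - (conj f j : ℤ)) := by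
    rw [hB]; exact Finset.sum_image (fun i _ j _ h => hbinj i j h)
  have e3 : ∑ e ∈ C, x ^ e = ∑ i ∈ Finset.range L, x ^ (-(i : ℤ)) := by
    rw [hC]; exact Finset.sum_image (fun i _ j _ h => by omega)
  have e4 : ∑ e ∈ D, x ^ e = ∑ j ∈ Finset.range M, x ^ ((j : ℤ) + 1) := by
    rw [hD]; exact Finset.sum_image (fun i _ j _ h => by omega)
  rw [← e1, ← e2, ← e3, ← e4]
  exact key

lemma wpow_eq (w : ℂ) (hw0 : w ≠ 0) (k : ℕ) (m : ℤ) :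
    w ^ ((k : ℤ) * (2 * m - 1)) = w ^ (-(k : ℤ)) * (w ^ (2 * (k : ℤ))) ^ m := by
  rw [← zpow_mul, ← zpow_add₀ hw0]
  congr 1
  ring

lemma aux_val (y : ℂ) (hy0 : y ≠ 0) (h2 : y ^ 2 - 1 ≠ 0) :
    y⁻¹ * (1 - (y ^ 2)⁻¹)⁻¹ = 1 / (y - y⁻¹) := by
  have hne1 : y - y⁻¹ ≠ 0 := by
    have h : y - y⁻¹ = (y ^ 2 - 1) * y⁻¹ := by
      field_simp
    rw [h]
    exact mul_ne_zero h2 (inv_ne_zero hy0)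
  have hne2 : (1 : ℂ) - (y ^ 2)⁻¹ ≠ 0 := by
    have h : (1 : ℂ) - (y ^ 2)⁻¹ = (y ^ 2 - 1) * (y ^ 2)⁻¹ := by
      field_simp
    rw [h]
    exact mul_ne_zero h2 (inv_ne_zero (pow_ne_zero 2 hy0))
  have key : y⁻¹ * (y - y⁻¹) = 1 - (y ^ 2)⁻¹ := by
    rw [mul_sub, inv_mul_cancel₀ hy0, ← mul_inv, ← sq]
  rw [eq_div_iff hne1]
  calc y⁻¹ * (1 - (y ^ 2)⁻¹)⁻¹ * (y - y⁻¹)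
      = (1 - (y ^ 2)⁻¹)⁻¹ * (y⁻¹ * (y - y⁻¹)) := by ring
    _ = (1 - (y ^ 2)⁻¹)⁻¹ * (1 - (y ^ 2)⁻¹) := by rw [key]
    _ = 1 := inv_mul_cancel₀ hne2

lemma partA (f : ℕ → ℕ) (hf : ∀ ⦃i j : ℕ⦄, i ≤ j → f j ≤ f i)
    (hev : ∃ N : ℕ, ∀ i : ℕ, N ≤ i → f i = 0) (k : ℕ) (hk : 1 ≤ k) (w : ℂ)
    (hw : 1 < ‖w‖) :
    HasSum (fun i : ℕ => w ^ ((k : ℤ) * (2 * (f i : ℤ) - 2 * (i : ℤ) - 1)))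
      ((∑ i ∈ Finset.range (plen f),
          (w ^ ((k : ℤ) * (2 * (f i : ℤ) - 2 * (i : ℤ) - 1))
            - w ^ ((k : ℤ) * (-2 * (i : ℤ) - 1)))) +
        1 / (w ^ (k : ℤ) - w ^ (-(k : ℤ)))) := by
  have hw0 : w ≠ 0 := by
    intro h
    rw [h, norm_zero] at hw
    linarith
  set y := w ^ k with hy
  have hy0 : y ≠ 0 := pow_ne_zero k hw0
  have hyabs : 1 < ‖y‖ := by
    rw [hy, norm_pow]
    exact one_lt_pow₀ hw (by omega)
  have hu : ‖(y ^ 2)⁻¹‖ < 1 := by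
    rw [norm_inv]
    apply inv_lt_one_of_one_lt₀
    rw [norm_pow]
    exact one_lt_pow₀ hyabs (by norm_num)
  have hy2ne : y ^ 2 ≠ 1 := by
    intro h
    rw [h] at hu
    simp at hu
  have hk1 : w ^ (k : ℤ) = y := zpow_natCast w k
  have hk2 : w ^ (-(k : ℤ)) = y⁻¹ := by rw [zpow_neg, zpow_natCast]
  have hx2 : w ^ (2 * (k : ℤ)) = y ^ 2 := by
    rw [hy, ← zpow_natCast w k, ← zpow_natCast (w ^ (k : ℤ)) 2, ← zpow_mul]
    congr 1
    push_cast
    ring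
  have hterm : ∀ i : ℕ, w ^ ((k : ℤ) * (-2 * (i : ℤ) - 1)) = y⁻¹ * ((y ^ 2)⁻¹) ^ i := by
    intro i
    have he : (k : ℤ) * (-2 * (i : ℤ) - 1) = (k : ℤ) * (2 * (-(i : ℤ)) - 1) := by ring
    rw [he, wpow_eq w hw0 k, hk2, hx2, zpow_neg, zpow_natCast, inv_pow]
  have hgeo : HasSum (fun i : ℕ => y⁻¹ * ((y ^ 2)⁻¹) ^ i) (y⁻¹ * (1 - (y ^ 2)⁻¹)⁻¹) :=
    (hasSum_geometric_of_norm_lt_one hu).mul_left y⁻¹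
  have hval : y⁻¹ * (1 - (y ^ 2)⁻¹)⁻¹ = 1 / (w ^ (k : ℤ) - w ^ (-(k : ℤ))) := by
    rw [hk1, hk2]
    exact aux_val y hy0 (sub_ne_zero.mpr hy2ne)
  have htail : HasSum (fun i : ℕ => w ^ ((k : ℤ) * (-2 * (i : ℤ) - 1)))
      (1 / (w ^ (k : ℤ) - w ^ (-(k : ℤ)))) := by
    rw [show (fun i : ℕ => w ^ ((k : ℤ) * (-2 * (i : ℤ) - 1)))
        = fun i : ℕ => y⁻¹ * ((y ^ 2)⁻¹) ^ i from funext hterm, ← hval]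
    exact hgeo
  have hfin : HasSum
      (fun i : ℕ => w ^ ((k : ℤ) * (2 * (f i : ℤ) - 2 * (i : ℤ) - 1))
        - w ^ ((k : ℤ) * (-2 * (i : ℤ) - 1)))
      (∑ i ∈ Finset.range (plen f),
        (w ^ ((k : ℤ) * (2 * (f i : ℤ) - 2 * (i : ℤ) - 1))
          - w ^ ((k : ℤ) * (-2 * (i : ℤ) - 1)))) := by
    apply hasSum_sum_of_ne_finset_zero
    intro i hi
    rw [Finset.mem_range] at hi
    have h0 : f i = 0 := by
      by_contra hne
      exact hi ((plen_lt_iff hf hev i).mpr hne)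
    rw [h0]
    have he : (k : ℤ) * (2 * ((0 : ℕ) : ℤ) - 2 * (i : ℤ) - 1)
        = (k : ℤ) * (-2 * (i : ℤ) - 1) := by push_cast; ring
    rw [he, sub_self]
  have hadd := hfin.add htail
  rw [show (fun i : ℕ =>
      (w ^ ((k : ℤ) * (2 * (f i : ℤ) - 2 * (i : ℤ) - 1))
        - w ^ ((k : ℤ) * (-2 * (i : ℤ) - 1)))
      + w ^ ((k : ℤ) * (-2 * (i : ℤ) - 1)))
      = fun i : ℕ => w ^ ((k : ℤ) * (2 * (f i : ℤ) - 2 * (i : ℤ) - 1)) from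
    funext fun i => by ring] at hadd
  exact hadd

end PSRCaux

open PSRCaux in
/-- (a) For `|w| > 1` the series `Σ_{i=1}^∞ w^{k(2ν_i − 2i + 1)}` converges to `F(w)`;
(b) for `0 < |w| < 1` the series `Σ_{j=1}^∞ w^{−k(2νᵀ_j − 2j + 1)}` converges to `−F(w)`. -/
theorem power_sum_rational_continuation (ν : NPartition) (k : ℕ) (hk : 1 ≤ k) :
    (∀ w : ℂ, 1 < ‖w‖ →
        HasSum
          (fun i : ℕ => w ^ ((k : ℤ) * (2 * (ν.part i : ℤ) - 2 * (i : ℤ) - 1)))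
          (Fexpr ν k w)) ∧
    (∀ w : ℂ, 0 < ‖w‖ → ‖w‖ < 1 →
        HasSum
          (fun j : ℕ => w ^ (-(k : ℤ) * (2 * (conj ν.part j : ℤ) - 2 * (j : ℤ) - 1)))
          (- Fexpr ν k w)) := by
  constructor
  · intro w hw
    exact partA ν.part ν.antitone ν.eventually_zero k hk w hw
  · intro w hw0 hw1
    have hwne : w ≠ 0 := by
      intro h
      rw [h] at hw0
      simp at hw0
    have hconj_anti : ∀ ⦃i j : ℕ⦄, i ≤ j → conj ν.part j ≤ conj ν.part i :=
      conj_antitone ν.antitone ν.eventually_zero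
    have hconj_ev : ∃ N : ℕ, ∀ i : ℕ, N ≤ i → conj ν.part i = 0 :=
      ⟨ν.part 0, conj_ev ν.antitone ν.eventually_zero⟩
    have hwinv : 1 < ‖w⁻¹‖ := by
      rw [norm_inv]
      exact (one_lt_inv₀ hw0).mpr hw1
    have h := partA (conj ν.part) hconj_anti hconj_ev k hk w⁻¹ hwinv
    rw [show (fun j : ℕ => (w⁻¹) ^ ((k : ℤ) * (2 * (conj ν.part j : ℤ) - 2 * (j : ℤ) - 1)))
        = fun j : ℕ => w ^ (-(k : ℤ) * (2 * (conj ν.part j : ℤ) - 2 * (j : ℤ) - 1)) from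
      funext fun j => by rw [inv_zpow', neg_mul]] at h
    have hM : plen (conj ν.part) = ν.part 0 := plen_conj ν.antitone ν.eventually_zero
    rw [hM] at h
    have hcomb := comb_identity ν.antitone ν.eventually_zero (w ^ (2 * (k : ℤ)))
    have heq : (∑ j ∈ Finset.range (ν.part 0),
          ((w⁻¹) ^ ((k : ℤ) * (2 * (conj ν.part j : ℤ) - 2 * (j : ℤ) - 1))
            - (w⁻¹) ^ ((k : ℤ) * (-2 * (j : ℤ) - 1))))
        + 1 / ((w⁻¹) ^ (k : ℤ) - (w⁻¹) ^ (-(k : ℤ))) = - Fexpr ν k w := by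
      unfold Fexpr
      have t1 : ∀ j ∈ Finset.range (ν.part 0),
          (w⁻¹) ^ ((k : ℤ) * (2 * (conj ν.part j : ℤ) - 2 * (j : ℤ) - 1))
            - (w⁻¹) ^ ((k : ℤ) * (-2 * (j : ℤ) - 1))
          = w ^ (-(k : ℤ)) * ((w ^ (2 * (k : ℤ))) ^ ((j : ℤ) + 1 - (conj ν.part j : ℤ))
              - (w ^ (2 * (k : ℤ))) ^ ((j : ℤ) + 1)) := by
        intro j _
        have e1 : -((k : ℤ) * (2 * (conj ν.part j : ℤ) - 2 * (j : ℤ) - 1))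
            = (k : ℤ) * (2 * ((j : ℤ) + 1 - (conj ν.part j : ℤ)) - 1) := by ring
        have e2 : -((k : ℤ) * (-2 * (j : ℤ) - 1))
            = (k : ℤ) * (2 * ((j : ℤ) + 1) - 1) := by ring
        rw [inv_zpow', inv_zpow', e1, e2, wpow_eq w hwne k, wpow_eq w hwne k]
        ring
      have t3 : ∀ i ∈ Finset.range (plen ν.part),
          w ^ ((k : ℤ) * (2 * (ν.part i : ℤ) - 2 * (i : ℤ) - 1))
            - w ^ ((k : ℤ) * (-2 * (i : ℤ) - 1))
          = w ^ (-(k : ℤ)) * ((w ^ (2 * (k : ℤ))) ^ ((ν.part i : ℤ) - (i : ℤ))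
              - (w ^ (2 * (k : ℤ))) ^ (-(i : ℤ))) := by
        intro i _
        have e1 : (k : ℤ) * (2 * (ν.part i : ℤ) - 2 * (i : ℤ) - 1)
            = (k : ℤ) * (2 * ((ν.part i : ℤ) - (i : ℤ)) - 1) := by ring
        have e2 : (k : ℤ) * (-2 * (i : ℤ) - 1)
            = (k : ℤ) * (2 * (-(i : ℤ)) - 1) := by ring
        rw [e1, e2, wpow_eq w hwne k, wpow_eq w hwne k]
        ring
      have hden : 1 / ((w⁻¹) ^ (k : ℤ) - (w⁻¹) ^ (-(k : ℤ)))
          = -(1 / (w ^ (k : ℤ) - w ^ (-(k : ℤ)))) := by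
        rw [inv_zpow', inv_zpow', neg_neg, ← neg_sub (w ^ (k : ℤ)) (w ^ (-(k : ℤ))), div_neg]
      rw [Finset.sum_congr rfl t1, Finset.sum_congr rfl t3, hden, ← Finset.mul_sum,
        ← Finset.mul_sum, Finset.sum_sub_distrib, Finset.sum_sub_distrib]
      linear_combination (w ^ (-(k : ℤ))) * hcomb
    rw [← heq]
    exact h
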